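/- Let w be a nonzero real number and n a natural number. For each integer N ≥ n set q_N = exp(2w/N). Then lim_{N→∞} (2/N)^n e^{2wn} [N choose n]_{q_N} = ((e^{4w} − 1)/(2w))^n / n!, where [N choose n]_{q_N} is the symmetric q-binomial coefficient evaluated at q = q_N. (This is the high-spin j = N/2 → ∞ contraction, with q = e^{w/j}, of the coefficients q^{nj} [2j choose n]_q^{1/2} appearing in the SU_q(2) coherent state, yielding the coefficients ((e^{2pw}−1)/(2w))^{n/2}/√(n!) of the coherent state of the quantum Heisenberg group H_q(1).) -/

import Mathlib

set_option maxHeartbeats 1000000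


/-- The symmetric q-integer `[m]_q = (q^m − q^{−m})/(q − q^{−1})`. -/
noncomputable def qIntSym (q : ℝ) (m : ℕ) : ℝ := (q ^ (m : ℤ) - q ^ (-(m : ℤ))) / (q - q⁻¹)

/-- The symmetric q-factorial `[n]_q! = ∏_{i=1}^{n} [i]_q`. -/
noncomputable def qFactSym (q : ℝ) (n : ℕ) : ℝ := ∏ i ∈ Finset.range n, qIntSym q (i + 1)

/-- The q-binomial coefficient `[N choose n]_q = [N]_q!/([n]_q! [N−n]_q!)`. -/
noncomputable def qBinomSym (q : ℝ) (N n : ℕ) : ℝ :=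
  qFactSym q N / (qFactSym q n * qFactSym q (N - n))

open Filter Real Finset

/-- `gg x = e^x - e^{-x} = 2 sinh x`. -/
noncomputable def gg (x : ℝ) : ℝ := Real.exp x - Real.exp (-x)

lemma gg_pos {x : ℝ} (hx : 0 < x) : 0 < gg x := by
  have : Real.exp (-x) < Real.exp x := Real.exp_lt_exp.mpr (by linarith)
  simp only [gg]; linarith

lemma gg_neg {x : ℝ} (hx : x < 0) : gg x < 0 := by
  have : Real.exp x < Real.exp (-x) := Real.exp_lt_exp.mpr (by linarith)
  simp only [gg]; linarith

lemma gg_ne {x : ℝ} (hx : x ≠ 0) : gg x ≠ 0 := by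
  rcases hx.lt_or_gt with h | h
  · exact (gg_neg h).ne
  · exact (gg_pos h).ne'

lemma gg_zero : gg 0 = 0 := by simp [gg]

lemma gg_cont : Continuous gg := by
  unfold gg
  exact Real.continuous_exp.sub (Real.continuous_exp.comp continuous_neg)

lemma qIntSym_exp (t : ℝ) (m : ℕ) : qIntSym (Real.exp t) m = gg ((m : ℝ) * t) / gg t := by
  unfold qIntSym gg
  rw [zpow_neg, zpow_natCast, ← Real.exp_nat_mul, ← Real.exp_neg, ← Real.exp_neg]

lemma qIntSym_exp_pos {t : ℝ} (ht : t ≠ 0) (m : ℕ) : 0 < qIntSym (Real.exp t) (m + 1) := by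
  rw [qIntSym_exp]
  have hm : (0 : ℝ) < ((m + 1 : ℕ) : ℝ) := by positivity
  rcases ht.lt_or_gt with h | h
  · have h1 : ((m + 1 : ℕ) : ℝ) * t < 0 := mul_neg_of_pos_of_neg hm h
    exact div_pos_of_neg_of_neg (gg_neg h1) (gg_neg h)
  · exact div_pos (gg_pos (mul_pos hm h)) (gg_pos h)

lemma qFactSym_exp_pos {t : ℝ} (ht : t ≠ 0) (k : ℕ) : 0 < qFactSym (Real.exp t) k := by
  unfold qFactSym
  exact Finset.prod_pos fun i _ => qIntSym_exp_pos ht i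

lemma gg_slope : Filter.Tendsto (fun x : ℝ => gg x / x) (nhdsWithin 0 {0}ᶜ) (nhds 2) := by
  have h2 : HasDerivAt (fun x : ℝ => Real.exp x) 1 0 := by simpa using Real.hasDerivAt_exp 0
  have h3 : HasDerivAt (fun x : ℝ => Real.exp (-x)) (-1) 0 := by
    simpa [Function.comp_def] using (Real.hasDerivAt_exp (-0)).comp 0 (hasDerivAt_neg (0 : ℝ))
  have h1 : HasDerivAt gg 2 0 := by
    have := h2.sub h3
    norm_num at this
    exact this
  have := hasDerivAt_iff_tendsto_slope.mp h1
  exact this.congr fun x => by simp [slope_def_field, gg_zero, div_eq_mul_inv, mul_comm]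

lemma gg_div_lim {c : ℝ} (hc : c ≠ 0) :
    Filter.Tendsto (fun N : ℕ => gg (c / N) / (c / N)) Filter.atTop (nhds 2) := by
  apply gg_slope.comp
  rw [tendsto_nhdsWithin_iff]
  constructor
  · exact tendsto_const_nhds.div_atTop tendsto_natCast_atTop_atTop
  · filter_upwards [eventually_gt_atTop 0] with N hN
    exact div_ne_zero hc (Nat.cast_ne_zero.mpr hN.ne')

lemma inv_gg_lim {c : ℝ} (hc : c ≠ 0) :
    Filter.Tendsto (fun N : ℕ => (c / N) / gg (c / N)) Filter.atTop (nhds 2⁻¹) := by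
  have := (gg_div_lim hc).inv₀ two_ne_zero
  exact this.congr fun N => by rw [inv_div]

lemma gg_ratio {a b : ℝ} (ha : a ≠ 0) (hb : b ≠ 0) :
    Filter.Tendsto (fun N : ℕ => gg (a / N) / gg (b / N)) Filter.atTop (nhds (a / b)) := by
  have h := ((gg_div_lim ha).div (gg_div_lim hb) two_ne_zero).mul_const (a / b)
  have h2 : (2 : ℝ) / 2 * (a / b) = a / b := by norm_num
  rw [h2] at h
  apply h.congr'
  filter_upwards [eventually_gt_atTop 0] with N hN
  have hN' : (N : ℝ) ≠ 0 := Nat.cast_ne_zero.mpr hN.ne'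
  have hbz : gg (b / N) ≠ 0 := gg_ne (div_ne_zero hb hN')
  simp only [Pi.div_apply]
  field_simp

/-- the high-spin `j = N/2 → ∞` contraction, with `q_N = e^{2w/N}`:
`lim_{N→∞} (2/N)^n e^{2wn} [N choose n]_{q_N} = ((e^{4w} − 1)/(2w))^n / n!`. -/
theorem high_spin_limit_qbinom (w : ℝ) (hw : w ≠ 0) (n : ℕ) :
    Filter.Tendsto
      (fun N : ℕ => (2 / (N : ℝ)) ^ n * Real.exp (2 * w * n) *
        qBinomSym (Real.exp (2 * w / N)) N n)
      Filter.atTop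
      (nhds (((Real.exp (4 * w) - 1) / (2 * w)) ^ n / (n.factorial : ℝ))) := by
  set c : ℝ := (Real.exp (4 * w) - 1) / (2 * w) with hc
  -- the auxiliary function
  set F : ℕ → ℝ := fun N =>
    (∏ i ∈ Finset.range n,
      (Real.exp (2 * w) / w *
        (gg (((N - n + (i + 1) : ℕ) : ℝ) * (2 * w / N)) * ((2 * w / N) / gg (2 * w / N))))) /
    (∏ i ∈ Finset.range n, gg (2 * w * ((i : ℝ) + 1) / N) / gg (2 * w / N)) with hF
  have hw2 : (2 : ℝ) * w ≠ 0 := by simpa using hw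
  have hmain : Filter.Tendsto F Filter.atTop (nhds (c ^ n / (n.factorial : ℝ))) := by
    have hnum : Filter.Tendsto (fun N : ℕ =>
        ∏ i ∈ Finset.range n,
          (Real.exp (2 * w) / w *
            (gg (((N - n + (i + 1) : ℕ) : ℝ) * (2 * w / N)) * ((2 * w / N) / gg (2 * w / N)))))
        Filter.atTop (nhds (c ^ n)) := by
      have : Filter.Tendsto (fun N : ℕ =>
          ∏ i ∈ Finset.range n,
            (Real.exp (2 * w) / w *
              (gg (((N - n + (i + 1) : ℕ) : ℝ) * (2 * w / N)) * ((2 * w / N) / gg (2 * w / N)))))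
          Filter.atTop (nhds (∏ _i ∈ Finset.range n, c)) := by
        apply tendsto_finset_prod
        intro i _
        have harg : Filter.Tendsto (fun N : ℕ => ((N - n + (i + 1) : ℕ) : ℝ) * (2 * w / N))
            Filter.atTop (nhds (2 * w)) := by
          have hb : Filter.Tendsto (fun N : ℕ => 2 * w + ((i : ℝ) + 1 - n) * (2 * w / N))
              Filter.atTop (nhds (2 * w + ((i : ℝ) + 1 - n) * 0)) := by
            exact tendsto_const_nhds.add
              ((tendsto_const_nhds.div_atTop tendsto_natCast_atTop_atTop).const_mul _)
          rw [mul_zero, add_zero] at hb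
          apply hb.congr'
          filter_upwards [eventually_ge_atTop n, eventually_gt_atTop 0] with N hn hN
          have hN' : (N : ℝ) ≠ 0 := Nat.cast_ne_zero.mpr hN.ne'
          push_cast [Nat.cast_sub hn]
          field_simp
          ring
        have h1 : Filter.Tendsto (fun N : ℕ => gg (((N - n + (i + 1) : ℕ) : ℝ) * (2 * w / N)))
            Filter.atTop (nhds (gg (2 * w))) := (gg_cont.continuousAt).tendsto.comp harg
        have h2 := inv_gg_lim hw2
        have := (h1.mul h2).const_mul (Real.exp (2 * w) / w)
        convert this using 2
        have e1 : Real.exp (2 * w) * Real.exp (2 * w) = Real.exp (4 * w) := by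
          rw [← Real.exp_add]; ring_nf
        have e2 : Real.exp (2 * w) * Real.exp (-(2 * w)) = 1 := by
          rw [← Real.exp_add]; simp
        rw [hc]
        unfold gg
        field_simp
        rw [mul_comm 2 w] at e1 e2
        linear_combination e2 - e1
      simpa [Finset.prod_const, Finset.card_range] using this
    have hden : Filter.Tendsto (fun N : ℕ =>
        ∏ i ∈ Finset.range n, gg (2 * w * ((i : ℝ) + 1) / N) / gg (2 * w / N))
        Filter.atTop (nhds ((n.factorial : ℝ))) := by
      have : Filter.Tendsto (fun N : ℕ =>
          ∏ i ∈ Finset.range n, gg (2 * w * ((i : ℝ) + 1) / N) / gg (2 * w / N))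
          Filter.atTop (nhds (∏ i ∈ Finset.range n, ((i : ℝ) + 1))) := by
        apply tendsto_finset_prod
        intro i _
        have hi : (2 : ℝ) * w * ((i : ℝ) + 1) ≠ 0 := by positivity
        have := gg_ratio hi hw2
        have hval : 2 * w * ((i : ℝ) + 1) / (2 * w) = (i : ℝ) + 1 := by
          field_simp
        rwa [hval] at this
      have hfac : (∏ i ∈ Finset.range n, ((i : ℝ) + 1)) = (n.factorial : ℝ) := by
        rw [← Finset.prod_range_add_one_eq_factorial]
        push_cast
        rfl
      rwa [hfac] at this
    have hfac0 : (n.factorial : ℝ) ≠ 0 := Nat.cast_ne_zero.mpr n.factorial_ne_zero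
    exact hnum.div hden hfac0
  apply hmain.congr'
  filter_upwards [eventually_ge_atTop n, eventually_ge_atTop 1] with N hn hN1
  have hN' : (N : ℝ) ≠ 0 := Nat.cast_ne_zero.mpr (by omega)
  have ht : 2 * w / (N : ℝ) ≠ 0 := div_ne_zero hw2 hN'
  have hggt : gg (2 * w / (N : ℝ)) ≠ 0 := gg_ne ht
  -- split the q-factorial
  have hsplit : qFactSym (Real.exp (2 * w / N)) N =
      qFactSym (Real.exp (2 * w / N)) (N - n) *
        ∏ i ∈ Finset.range n, qIntSym (Real.exp (2 * w / N)) (N - n + (i + 1)) := by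
    unfold qFactSym
    rw [show Finset.range N = Finset.range ((N - n) + n) by rw [Nat.sub_add_cancel hn],
      Finset.prod_range_add]
    simp [Nat.add_assoc]
  have hA : qFactSym (Real.exp (2 * w / N)) (N - n) ≠ 0 := (qFactSym_exp_pos ht _).ne'
  have hbinom : qBinomSym (Real.exp (2 * w / N)) N n =
      (∏ i ∈ Finset.range n, qIntSym (Real.exp (2 * w / N)) (N - n + (i + 1))) /
        qFactSym (Real.exp (2 * w / N)) n := by
    rw [qBinomSym, hsplit,
      mul_comm (qFactSym (Real.exp (2 * w / N)) n) (qFactSym (Real.exp (2 * w / N)) (N - n)),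
      mul_div_mul_left _ _ hA]
  -- rewrite both sides as a single product
  have hRHS : (2 / (N : ℝ)) ^ n * Real.exp (2 * w * n) * qBinomSym (Real.exp (2 * w / N)) N n =
      ∏ i ∈ Finset.range n,
        (2 / (N : ℝ) * Real.exp (2 * w) *
          (qIntSym (Real.exp (2 * w / N)) (N - n + (i + 1)) /
            qIntSym (Real.exp (2 * w / N)) (i + 1))) := by
    rw [hbinom, qFactSym]
    rw [Finset.prod_mul_distrib, Finset.prod_const, Finset.prod_div_distrib,
      Finset.card_range, mul_pow, ← Real.exp_nat_mul]
    ring_nf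
  have hLHS : F N = ∏ i ∈ Finset.range n,
      (2 / (N : ℝ) * Real.exp (2 * w) *
        (qIntSym (Real.exp (2 * w / N)) (N - n + (i + 1)) /
          qIntSym (Real.exp (2 * w / N)) (i + 1))) := by
    rw [hF]
    beta_reduce
    rw [← Finset.prod_div_distrib]
    apply Finset.prod_congr rfl
    intro i _
    rw [qIntSym_exp, qIntSym_exp]
    have hb : gg (2 * w * ((i : ℝ) + 1) / N) = gg (((i + 1 : ℕ) : ℝ) * (2 * w / N)) := by
      congr 1
      push_cast
      ring
    rw [hb]
    have hgb : gg (((i + 1 : ℕ) : ℝ) * (2 * w / N)) ≠ 0 := by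
      apply gg_ne
      apply mul_ne_zero _ ht
      positivity
    generalize gg (((N - n + (i + 1) : ℕ) : ℝ) * (2 * w / N)) = GA
    generalize hGB : gg (((i + 1 : ℕ) : ℝ) * (2 * w / N)) = GB at hgb ⊢
    generalize hGT : gg (2 * w / (N : ℝ)) = GT at hggt ⊢
    field_simp
  rw [hLHS, ← hRHS]
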